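/- Let G be a finite paw-free graph, v a vertex, and S ⊆ N(v) such that G[S] contains at least one edge, with complete multipartition S = I_1 ∪ … ∪ I_q (each I_j independent, all edges between distinct parts present). Let u ∉ S ∪ {v} be a vertex with a neighbor in S. If u is not adjacent to v, then u is adjacent to every vertex of S. If u is adjacent to v, then u is adjacent to every vertex of S \ I_j for some j. -/
import Mathlib


open Set

variable {V : Type*}

/-- The closed neighborhood of a set of vertices: `N[X]`. -/
def closedNbhd (G : SimpleGraph V) (X : Set V) : Set V :=
  {y | ∃ x ∈ X, y = x ∨ G.Adj x y}

/-- `X` dominates `A` in `G`: `A ⊆ N[X]`. -/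
def Dominates (G : SimpleGraph V) (X A : Set V) : Prop :=
  A ⊆ closedNbhd G X

/-- `X` is an inclusion-wise minimal set dominating `A` in `G`. -/
def MinDom (G : SimpleGraph V) (X A : Set V) : Prop :=
  Dominates G X A ∧ ∀ Y, Y ⊂ X → ¬ Dominates G Y A

/-- `S` is an independent set in `G`. -/
def IndepSet (G : SimpleGraph V) (S : Set V) : Prop :=
  S.Pairwise fun x y => ¬ G.Adj x y

/-- `G` contains no induced paw (triangle `abc` plus pendant vertex `d` attached to `a`). -/
def PawFree (G : SimpleGraph V) : Prop :=
  ¬ ∃ a b c d : V, a ≠ b ∧ a ≠ c ∧ a ≠ d ∧ b ≠ c ∧ b ≠ d ∧ c ≠ d ∧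
    G.Adj a b ∧ G.Adj a c ∧ G.Adj b c ∧ G.Adj a d ∧ ¬ G.Adj b d ∧ ¬ G.Adj c d

theorem stmt_15 [Fintype V] (G : SimpleGraph V) (h : PawFree G) (v : V)
    (S : Set V) (hS : S ⊆ G.neighborSet v)
    {ι : Type*} (I : ι → Set V)
    (hcover : S = ⋃ j, I j)
    (hindep : ∀ j, IndepSet G (I j))
    (hcross : ∀ j k, j ≠ k → ∀ x ∈ I j, ∀ y ∈ I k, G.Adj x y)
    (hedge : ∃ x ∈ S, ∃ y ∈ S, G.Adj x y)
    (u : V) (huS : u ∉ S) (huv : u ≠ v) (hnb : ∃ s ∈ S, G.Adj u s) :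
    (¬ G.Adj u v → ∀ s ∈ S, G.Adj u s) ∧
      (G.Adj u v → ∃ j, ∀ s ∈ S \ I j, G.Adj u s) := by
  obtain ⟨x, hxS, y, hyS, hxy⟩ := hedge
  have hvadj : ∀ s ∈ S, G.Adj v s := fun s hs => hS hs
  -- every vertex of S is adjacent to x or to y
  have hxory : ∀ b ∈ S, G.Adj b x ∨ G.Adj b y := by
    intro b hb
    by_contra hc
    push_neg at hc
    obtain ⟨hbx, hby⟩ := hc
    obtain ⟨j, hbj⟩ := Set.mem_iUnion.1 (hcover ▸ hb : b ∈ ⋃ j, I j)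
    obtain ⟨k, hxk⟩ := Set.mem_iUnion.1 (hcover ▸ hxS : x ∈ ⋃ j, I j)
    obtain ⟨l, hyl⟩ := Set.mem_iUnion.1 (hcover ▸ hyS : y ∈ ⋃ j, I j)
    have hjk : j = k := by
      by_contra hne
      exact hbx (hcross j k hne b hbj x hxk)
    have hjl : j = l := by
      by_contra hne
      exact hby (hcross j l hne b hbj y hyl)
    subst hjk; subst hjl
    exact hindep j hxk hyl hxy.ne hxy
  constructor
  · intro hunv
    have hstep : ∀ a ∈ S, G.Adj u a → ∀ b ∈ S, G.Adj a b → G.Adj u b := by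
      intro a ha hua b hb hab
      by_contra hub
      exact h ⟨a, b, v, u, hab.ne, (hvadj a ha).ne', fun e => huS (e ▸ ha),
        (hvadj b hb).ne', fun e => huS (e ▸ hb), fun e => huv e.symm,
        hab, (hvadj a ha).symm, (hvadj b hb).symm, hua.symm,
        fun e => hub e.symm, fun e => hunv e.symm⟩
    obtain ⟨s₀, hs₀S, hus₀⟩ := hnb
    have huxy : G.Adj u x ∧ G.Adj u y := by
      rcases hxory s₀ hs₀S with h1 | h1
      · have hux := hstep s₀ hs₀S hus₀ x hxS h1
        exact ⟨hux, hstep x hxS hux y hyS hxy⟩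
      · have huy := hstep s₀ hs₀S hus₀ y hyS h1
        exact ⟨hstep y hyS huy x hxS hxy.symm, huy⟩
    intro s hsS
    rcases hxory s hsS with h1 | h1
    · exact hstep x hxS huxy.1 s hsS h1.symm
    · exact hstep y hyS huxy.2 s hsS h1.symm
  · intro huvadj
    by_cases hall : ∀ s ∈ S, G.Adj u s
    · obtain ⟨j, _⟩ := Set.mem_iUnion.1 (hcover ▸ hxS : x ∈ ⋃ j, I j)
      exact ⟨j, fun s hs => hall s hs.1⟩
    · push_neg at hall
      obtain ⟨t, htS, hut⟩ := hall
      obtain ⟨j, htj⟩ := Set.mem_iUnion.1 (hcover ▸ htS : t ∈ ⋃ j, I j)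
      refine ⟨j, fun s hs => ?_⟩
      obtain ⟨hsS, hsj⟩ := hs
      by_contra hus
      obtain ⟨k, hsk⟩ := Set.mem_iUnion.1 (hcover ▸ hsS : s ∈ ⋃ j, I j)
      have hjk : j ≠ k := fun e => hsj (e ▸ hsk)
      have hts : G.Adj t s := hcross j k hjk t htj s hsk
      exact h ⟨v, t, s, u, (hvadj t htS).ne, (hvadj s hsS).ne, huv.symm,
        hts.ne, fun e => huS (e ▸ htS), fun e => huS (e ▸ hsS),
        hvadj t htS, hvadj s hsS, hts, huvadj.symm,
        fun e => hut e.symm, fun e => hus e.symm⟩
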